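/- A (d-1)-dimensional simplicial complex K that is (S_r) over a field k for some r ≥ 2 is pure, i.e., every facet of K has dimension d - 1. -/

import Mathlib

noncomputable section

/-! ## Singular homology machinery -/

namespace SimplexCategory

/-- The old Mathlib (Dec 2024) topological simplex, restored: `ℝ≥0`-valued barycentric
coordinates summing to `1`. -/
def toTopObj (x : SimplexCategory) : Set (Fin (x.len + 1) → NNReal) :=
  {f | ∑ i, f i = 1}

/-- The old Mathlib (Dec 2024) map of topological simplices induced by a morphism. -/
def toTopMap {x y : SimplexCategory} (f : x ⟶ y) (g : x.toTopObj) : y.toTopObj :=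
  ⟨fun i => ∑ j ∈ Finset.univ.filter (fun j => f.toOrderHom j = i), (g : Fin (x.len + 1) → NNReal) j, by
    change (∑ i, ∑ j ∈ Finset.univ.filter (fun j => f.toOrderHom j = i), (g : Fin (x.len + 1) → NNReal) j) = 1
    rw [Finset.sum_fiberwise]
    exact g.2⟩

theorem continuous_toTopMap {x y : SimplexCategory} (f : x ⟶ y) : Continuous (toTopMap f) :=
  Continuous.subtype_mk (continuous_pi fun _ => continuous_finset_sum _ fun j _ =>
    (continuous_apply j).comp continuous_subtype_val) _

end SimplexCategory

/-- The topological standard `n`-simplex. -/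
abbrev TopSimplex (n : ℕ) : Type := (SimplexCategory.mk n).toTopObj

/-- The `i`-th face inclusion of topological simplices, as a continuous map. -/
def faceIncl {n : ℕ} (i : Fin (n + 2)) : C(TopSimplex n, TopSimplex (n + 1)) :=
  ⟨SimplexCategory.toTopMap (SimplexCategory.δ i), SimplexCategory.continuous_toTopMap _⟩

/-- Singular `n`-chains of `X` with coefficients in `k`:
the free `k`-module on continuous maps from the standard `n`-simplex. -/
abbrev SChain (k : Type) [Field k] (X : Type*) [TopologicalSpace X] (n : ℕ) :=
  C(TopSimplex n, X) →₀ k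

variable (k : Type) [Field k]

/-- The singular boundary map `C_{n+1}(X) → C_n(X)`. -/
def sBoundary (X : Type*) [TopologicalSpace X] (n : ℕ) :
    SChain k X (n + 1) →ₗ[k] SChain k X n :=
  Finsupp.lsum k fun σ => ∑ i : Fin (n + 2),
    ((-1 : k) ^ (i : ℕ)) • Finsupp.lsingle (σ.comp (faceIncl i))

/-- The chain map induced by a continuous map. -/
def chainMap {A X : Type*} [TopologicalSpace A] [TopologicalSpace X] (f : C(A, X)) (n : ℕ) :
    SChain k A n →ₗ[k] SChain k X n :=
  Finsupp.lmapDomain k k fun σ => f.comp σ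

lemma chainMap_comm {A X : Type*} [TopologicalSpace A] [TopologicalSpace X] (f : C(A, X))
    (n : ℕ) :
    (sBoundary k X n).comp (chainMap k f (n + 1)) = (chainMap k f n).comp (sBoundary k A n) := by
  apply Finsupp.lhom_ext
  intro σ b
  simp only [LinearMap.coe_comp, Function.comp_apply, chainMap, Finsupp.lmapDomain_apply,
    Finsupp.mapDomain_single, sBoundary, Finsupp.lsum_single, LinearMap.coe_sum,
    Finset.sum_apply, LinearMap.smul_apply, Finsupp.lsingle_apply, map_sum,
    Finsupp.mapDomain_smul, ContinuousMap.comp_assoc]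

/-- Chains of `X` supported on a subspace `A ⊆ X`
(the image of the chains of `A` under the inclusion). -/
def subChains (X : Type*) [TopologicalSpace X] (A : Set X) (n : ℕ) :
    Submodule k (SChain k X n) :=
  LinearMap.range (chainMap k ⟨(Subtype.val : A → X), continuous_subtype_val⟩ n)

/-- Relative singular `n`-chains of the pair `(X, A)`. -/
abbrev RelChain (X : Type*) [TopologicalSpace X] (A : Set X) (n : ℕ) :=
  SChain k X n ⧸ subChains k X A n

lemma subChains_le (X : Type*) [TopologicalSpace X] (A : Set X) (n : ℕ) :
    subChains k X A (n + 1) ≤ (subChains k X A n).comap (sBoundary k X n) := by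
  rintro x ⟨y, rfl⟩
  exact ⟨sBoundary k A n y, (LinearMap.congr_fun (chainMap_comm k _ n) y).symm⟩

/-- The boundary map on relative singular chains. -/
def relBoundary (X : Type*) [TopologicalSpace X] (A : Set X) (n : ℕ) :
    RelChain k X A (n + 1) →ₗ[k] RelChain k X A n :=
  Submodule.mapQ _ _ (sBoundary k X n) (subChains_le k X A n)

/-- Relative singular cycles. -/
def relCycles (X : Type*) [TopologicalSpace X] (A : Set X) :
    (n : ℕ) → Submodule k (RelChain k X A n)
  | 0 => ⊤
  | n + 1 => LinearMap.ker (relBoundary k X A n)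

/-- Relative singular homology `H_n(X, A; k)`: cycles modulo boundaries. -/
def RelHomology (X : Type*) [TopologicalSpace X] (A : Set X) (n : ℕ) : Type _ :=
  ↥((relCycles k X A n).map (LinearMap.range (relBoundary k X A n)).mkQ)

/-- Local homology `H_n(X, X - p; k)`. -/
def LocalHomology (X : Type*) [TopologicalSpace X] (p : X) (n : ℕ) : Type _ :=
  RelHomology k X ({p}ᶜ) n

/-- Local homology with integer index (trivial in negative degrees). -/
def LocalHomologyZ (X : Type*) [TopologicalSpace X] (p : X) : ℤ → Type _
  | .ofNat n => LocalHomology k X p n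
  | .negSucc _ => PUnit

instance (X : Type*) [TopologicalSpace X] (p : X) (n : ℕ) :
    AddCommGroup (LocalHomology k X p n) := by
  unfold LocalHomology RelHomology; infer_instance

instance (X : Type*) [TopologicalSpace X] (p : X) (n : ℕ) :
    Module k (LocalHomology k X p n) := by
  unfold LocalHomology RelHomology; infer_instance

instance (X : Type*) [TopologicalSpace X] (p : X) (j : ℤ) :
    AddCommGroup (LocalHomologyZ k X p j) := by
  unfold LocalHomologyZ; cases j <;> infer_instance

instance (X : Type*) [TopologicalSpace X] (p : X) (j : ℤ) :
    Module k (LocalHomologyZ k X p j) := by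
  unfold LocalHomologyZ; cases j <;> infer_instance

/-- The augmentation map on singular `0`-chains. -/
def sAugment (X : Type*) [TopologicalSpace X] : SChain k X 0 →ₗ[k] k :=
  Finsupp.lsum k fun _ => LinearMap.id

/-- Reduced singular cycles (using the augmented chain complex). -/
def redCycles (X : Type*) [TopologicalSpace X] : (n : ℕ) → Submodule k (SChain k X n)
  | 0 => LinearMap.ker (sAugment k X)
  | n + 1 => LinearMap.ker (sBoundary k X n)

/-- Reduced singular homology `H̃_n(X; k)`. -/
def RedHomology (X : Type*) [TopologicalSpace X] (n : ℕ) : Type _ :=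
  ↥((redCycles k X n).map (LinearMap.range (sBoundary k X n)).mkQ)

/-! ## Abstract simplicial complexes and their geometric realization -/

/-- A (possibly empty) abstract simplicial complex on the vertex set `V`,
whose faces include the empty set whenever there is any face. -/
structure ASC (V : Type) where
  faces : Set (Finset V)
  down_closed : ∀ {s t : Finset V}, s ∈ faces → t ⊆ s → t ∈ faces

/-- The dimension of a face: its cardinality minus one. -/
def dimF {V : Type} (s : Finset V) : ℤ := (s.card : ℤ) - 1

namespace ASC

variable {V : Type}

/-- The link of a face `σ`. -/
def link [DecidableEq V] (K : ASC V) (σ : Finset V) : ASC V where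
  faces := {τ | τ ∩ σ = ∅ ∧ τ ∪ σ ∈ K.faces}
  down_closed := by
    rintro s t ⟨hd, hu⟩ hts
    refine ⟨Finset.subset_empty.mp ?_, K.down_closed hu (Finset.union_subset_union hts Finset.Subset.rfl)⟩
    rw [← hd]
    exact Finset.inter_subset_inter hts Finset.Subset.rfl

/-- A facet: an inclusion-maximal face. -/
def IsFacet (K : ASC V) (s : Finset V) : Prop :=
  s ∈ K.faces ∧ ∀ t ∈ K.faces, s ⊆ t → s = t

/-- The subcomplex of `K` generated by a given family of faces of `K`. -/
def gen (K : ASC V) (F : Set (Finset V)) : ASC V where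
  faces := {t | ∃ s ∈ F ∩ K.faces, t ⊆ s}
  down_closed := by rintro s t ⟨u, hu, hsu⟩ hts; exact ⟨u, hu, hts.trans hsu⟩

/-- `K^⟨m⟩`: the subcomplex generated by all facets of dimension at least `m`. -/
def aboveSkel (K : ASC V) (m : ℤ) : ASC V :=
  K.gen {s | K.IsFacet s ∧ m ≤ dimF s}

/-- `K^[m]`: the pure `m`-skeleton, generated by all `m`-dimensional faces. -/
def pureSkel (K : ASC V) (m : ℤ) : ASC V :=
  K.gen {s | dimF s = m}

/-- The `m`-skeleton: all faces of dimension at most `m`. -/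
def skel (K : ASC V) (m : ℤ) : ASC V where
  faces := {s | s ∈ K.faces ∧ dimF s ≤ m}
  down_closed := by
    rintro s t ⟨hs, hds⟩ hts
    refine ⟨K.down_closed hs hts, le_trans ?_ hds⟩
    simp only [dimF, sub_le_sub_iff_right, Nat.cast_le]
    exact Finset.card_le_card hts

/-- `K` has dimension `n`. -/
def hasDim (K : ASC V) (n : ℤ) : Prop :=
  (∃ s ∈ K.faces, dimF s = n) ∧ ∀ s ∈ K.faces, dimF s ≤ n

/-- The geometric realization of `K`, as a subset of `V → ℝ`. -/
def realizSet (K : ASC V) [Fintype V] : Set (V → ℝ) :=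
  {f | (∀ v, 0 ≤ f v) ∧ (∑ v, f v) = 1 ∧ ∃ s ∈ K.faces, ∀ v, f v ≠ 0 → v ∈ s}

/-- The geometric realization of `K`, as a topological space. -/
abbrev space (K : ASC V) [Fintype V] : Type _ := ↥(K.realizSet)

/-- The set of points of `|K|` lying in the realization of a subcomplex `L`. -/
def subSpace (K : ASC V) [Fintype V] (L : ASC V) : Set K.space :=
  {p | ∃ s ∈ L.faces, ∀ v, (p : V → ℝ) v ≠ 0 → v ∈ s}

/-- `p` lies in the (relative) interior of the face `σ`, i.e. the support of `p` is
exactly `σ`. -/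
def inInterior (K : ASC V) [Fintype V] (σ : Finset V) (p : K.space) : Prop :=
  ∀ v, (p : V → ℝ) v ≠ 0 ↔ v ∈ σ

end ASC

/-! ## Simplicial homology -/

/-- The `n`-dimensional faces of `K` (faces of cardinality `n+1`). -/
def FacesDim {V : Type} (K : ASC V) (n : ℕ) : Type _ :=
  {s : Finset V // s ∈ K.faces ∧ s.card = n + 1}

/-- Simplicial `n`-chains. -/
abbrev SimpChain {V : Type} (K : ASC V) (n : ℕ) : Type _ := FacesDim K n →₀ k

/-- The `i`-th vertex of a face of cardinality `n` (in the vertex order). -/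
def faceVertex {V : Type} [LinearOrder V] {n : ℕ} (s : Finset V) (hs : s.card = n)
    (i : Fin n) : V :=
  (s.sort (· ≤ ·))[(i : ℕ)]'(by rw [Finset.length_sort, hs]; exact i.isLt)

lemma faceVertex_mem {V : Type} [LinearOrder V] {n : ℕ} (s : Finset V) (hs : s.card = n)
    (i : Fin n) : faceVertex s hs i ∈ s :=
  (Finset.mem_sort _).mp (List.getElem_mem _)

/-- The simplicial boundary map. -/
def simpBoundary {V : Type} [LinearOrder V] (K : ASC V) (n : ℕ) :
    SimpChain k K (n + 1) →ₗ[k] SimpChain k K n :=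
  Finsupp.lsum k fun s => ∑ i : Fin (n + 2),
    ((-1 : k) ^ (i : ℕ)) • Finsupp.lsingle
      ⟨s.1.erase (faceVertex s.1 s.2.2 i),
        K.down_closed s.2.1 (Finset.erase_subset _ _), by
          rw [Finset.card_erase_of_mem (faceVertex_mem s.1 s.2.2 i), s.2.2]; omega⟩

/-- The simplicial augmentation map. -/
def simpAugment {V : Type} (K : ASC V) : SimpChain k K 0 →ₗ[k] k :=
  Finsupp.lsum k fun _ => LinearMap.id

/-- Reduced simplicial cycles (augmented chain complex). -/
def simpRedCycles {V : Type} [LinearOrder V] (K : ASC V) :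
    (n : ℕ) → Submodule k (SimpChain k K n)
  | 0 => (LinearMap.ker (simpAugment k K) : Submodule k (SimpChain k K 0))
  | n + 1 => LinearMap.ker (simpBoundary k K n)

/-- Reduced simplicial homology `H̃_n(K; k)` in degree `n : ℕ`. -/
def SimpRedHomology {V : Type} [LinearOrder V] (K : ASC V) (n : ℕ) : Type _ :=
  ↥((simpRedCycles k K n).map (LinearMap.range (simpBoundary k K n)).mkQ)

instance {V : Type} [LinearOrder V] (K : ASC V) (n : ℕ) :
    AddCommGroup (SimpRedHomology k K n) := by unfold SimpRedHomology; infer_instance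

instance {V : Type} [LinearOrder V] (K : ASC V) (n : ℕ) :
    Module k (SimpRedHomology k K n) := by unfold SimpRedHomology; infer_instance

/-- The cokernel of the simplicial augmentation: reduced homology in degree `-1`. -/
def augCoker {V : Type} (K : ASC V) : Type _ :=
  k ⧸ LinearMap.range (simpAugment k K)

instance {V : Type} (K : ASC V) : AddCommGroup (augCoker k K) := by
  unfold augCoker; infer_instance

instance {V : Type} (K : ASC V) : Module k (augCoker k K) := by
  unfold augCoker; infer_instance

/-- Reduced simplicial homology with integer index: in degree `-1` it is the cokernel of the
augmentation, and it is trivial in degrees below `-1`. -/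
def SimpRedHomologyZ {V : Type} [LinearOrder V] (K : ASC V) : ℤ → Type _
  | .ofNat n => SimpRedHomology k K n
  | .negSucc 0 => augCoker k K
  | .negSucc (_ + 1) => PUnit

instance {V : Type} [LinearOrder V] (K : ASC V) (j : ℤ) :
    AddCommGroup (SimpRedHomologyZ k K j) := by
  unfold SimpRedHomologyZ
  match j with
  | .ofNat n => infer_instance
  | .negSucc 0 => infer_instance
  | .negSucc (_ + 1) => infer_instance

instance {V : Type} [LinearOrder V] (K : ASC V) (j : ℤ) :
    Module k (SimpRedHomologyZ k K j) := by
  unfold SimpRedHomologyZ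
  match j with
  | .ofNat n => infer_instance
  | .negSucc 0 => infer_instance
  | .negSucc (_ + 1) => infer_instance

/-! ## Serre conditions -/

/-- Serre's condition `(S_r)` over `k` for a `(d-1)`-dimensional complex `K`. -/
def IsSerre {V : Type} [LinearOrder V] (K : ASC V) (d r : ℕ) : Prop :=
  ∀ σ ∈ K.faces, ∀ i : ℕ,
    (i : ℤ) < min ((r : ℤ) - 1) ((d : ℤ) - dimF σ - 2) →
      Subsingleton (SimpRedHomology k (K.link σ) i)

/-- Sequentially `(S_r)`: every pure `m`-skeleton (an `m`-dimensional complex) is `(S_r)`. -/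
def SeqSerre {V : Type} [LinearOrder V] (K : ASC V) (r : ℕ) : Prop :=
  ∀ m : ℕ, IsSerre k (K.pureSkel (m : ℤ)) (m + 1) r

/-! ## Topological notions -/

/-- The open unit ball in `ℝ^n`. -/
def openBall (n : ℕ) : Set (EuclideanSpace ℝ (Fin n)) := Metric.ball 0 1

/-- `p` has a neighborhood homeomorphic to an open `j`-dimensional ball. -/
def HasBallNbhd {X : Type*} [TopologicalSpace X] (p : X) (j : ℕ) : Prop :=
  ∃ U ∈ nhds p, Nonempty (↥U ≃ₜ ↥(openBall j))

/-- `D_j(X; k)`: the points with nonvanishing `j`-th local homology. -/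
def Dset (X : Type*) [TopologicalSpace X] (j : ℕ) : Set X :=
  {p | Nontrivial (LocalHomology k X p j)}

/-- `X^⟨m⟩`: the closure of the union of the `D_j(X; k)` for `j ≥ m`. -/
def aboveSet (X : Type*) [TopologicalSpace X] (m : ℕ) : Set X :=
  closure (⋃ j : ℕ, ⋃ _ : m ≤ j, Dset k X j)

/-- The dimension of a subset `S` of a space is at most `ℓ`: `S` contains no open ball of
dimension greater than `ℓ`.  (The empty set has negative dimension.) -/
def SetDimLE {X : Type*} [TopologicalSpace X] (S : Set X) (ℓ : ℤ) : Prop :=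
  ∀ n : ℕ, (∃ B : Set X, B ⊆ S ∧ Nonempty (↥B ≃ₜ ↥(openBall n))) → (n : ℤ) ≤ ℓ


/-! ## Auxiliary combinatorics for purity -/

lemma ASC.ext' {V : Type} {K L : ASC V} (h : K.faces = L.faces) : K = L := by
  cases K; cases L; cases h; rfl

lemma ASC.link_faces_inter {V : Type} [DecidableEq V] {K : ASC V} {σ τ : Finset V}
    (h : τ ∈ (K.link σ).faces) : τ ∩ σ = ∅ := h.1

lemma ASC.link_faces_union {V : Type} [DecidableEq V] {K : ASC V} {σ τ : Finset V}
    (h : τ ∈ (K.link σ).faces) : τ ∪ σ ∈ K.faces := h.2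

lemma ASC.link_empty {V : Type} [DecidableEq V] (K : ASC V) : K.link ∅ = K := by
  apply ASC.ext'
  ext τ
  simp [ASC.link]

lemma ASC.link_link {V : Type} [DecidableEq V] (K : ASC V) (σ τ : Finset V)
    (h : τ ∩ σ = ∅) : (K.link σ).link τ = K.link (σ ∪ τ) := by
  apply ASC.ext'
  ext ρ
  have hu : ρ ∪ τ ∪ σ = ρ ∪ (σ ∪ τ) := by
    rw [Finset.union_assoc, Finset.union_comm τ σ]
  simp only [ASC.link, Set.mem_setOf_eq, hu]
  rw [Finset.eq_empty_iff_forall_notMem, Finset.eq_empty_iff_forall_notMem,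
    Finset.eq_empty_iff_forall_notMem]
  have h' := Finset.eq_empty_iff_forall_notMem.mp h
  constructor
  · rintro ⟨h1, h2, h3⟩
    refine ⟨fun x hx => ?_, h3⟩
    simp only [Finset.mem_inter, Finset.mem_union] at hx
    rcases hx with ⟨hxρ, hxσ | hxτ⟩
    · exact h2 x (by simp [hxρ, hxσ])
    · exact h1 x (by simp [hxρ, hxτ])
  · rintro ⟨h1, h3⟩
    refine ⟨fun x hx => ?_, fun x hx => ?_, h3⟩
    · simp only [Finset.mem_inter] at hx
      exact h1 x (by simp [hx.1, hx.2])
    · simp only [Finset.mem_inter, Finset.mem_union] at hx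
      rcases hx with ⟨hxρ | hxτ, hxσ⟩
      · exact h1 x (by simp [hxρ, hxσ])
      · exact h' x (by simp [hxτ, hxσ])

lemma decEq_subsingleton {V : Type} : Subsingleton (DecidableEq V) := by
  constructor
  intro a b
  funext x y
  exact Subsingleton.elim (a x y) (b x y)

lemma link_instIrrel {V : Type} (i j : DecidableEq V) (K : ASC V) (σ : Finset V) :
    @ASC.link V i K σ = @ASC.link V j K σ := by
  rw [@Subsingleton.elim (DecidableEq V) decEq_subsingleton i j]


/-- The edge relation of (the 1-skeleton of) a complex. -/
def EdgeRel {V : Type} [DecidableEq V] (L : ASC V) (a b : V) : Prop := ({a, b} : Finset V) ∈ L.faces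

/-- Combinatorial connectivity of the 1-skeleton. -/
def GraphConn {V : Type} [DecidableEq V] (L : ASC V) : Prop :=
  ∀ u v : V, ({u} : Finset V) ∈ L.faces → ({v} : Finset V) ∈ L.faces →
    Relation.ReflTransGen (EdgeRel L) u v

lemma graphConn_irrel {V : Type} (i j : DecidableEq V) (K : ASC V) (σ : Finset V) :
    @GraphConn V i (@ASC.link V i K σ) → @GraphConn V j (@ASC.link V j K σ) := by
  cases @Subsingleton.elim (DecidableEq V) decEq_subsingleton i j
  exact id

open Classical in
/-- Vanishing reduced 0-th homology implies the 1-skeleton is connected. -/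
lemma graphConn_of_subsingleton {V : Type} [LinearOrder V] (L : ASC V)
    (h : Subsingleton (SimpRedHomology k L 0)) : GraphConn L := by
  intro u v hu hv
  by_contra hreach
  have h' : Subsingleton
      ↥((simpRedCycles k L 0).map (LinearMap.range (simpBoundary k L 0)).mkQ) := h
  have hbot : (simpRedCycles k L 0).map (LinearMap.range (simpBoundary k L 0)).mkQ = ⊥ :=
    Submodule.eq_bot_of_subsingleton
  have hsub : simpRedCycles k L 0 ≤ LinearMap.range (simpBoundary k L 0) := by
    intro x hx
    have hx0 : (LinearMap.range (simpBoundary k L 0)).mkQ x = 0 := by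
      have : (LinearMap.range (simpBoundary k L 0)).mkQ x ∈
          (simpRedCycles k L 0).map (LinearMap.range (simpBoundary k L 0)).mkQ :=
        Submodule.mem_map_of_mem hx
      rw [hbot] at this
      simpa using this
    rwa [← LinearMap.mem_ker, Submodule.ker_mkQ] at hx0
  set R := EdgeRel L with hRdef
  let a0 : FacesDim L 0 := ⟨{u}, hu, by simp⟩
  let a1 : FacesDim L 0 := ⟨{v}, hv, by simp⟩
  let z : SimpChain k L 0 := Finsupp.single a0 1 - Finsupp.single a1 1
  have hz : z ∈ simpRedCycles k L 0 := by
    show z ∈ LinearMap.ker (simpAugment k L)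
    rw [LinearMap.mem_ker]
    simp only [z, map_sub, simpAugment, Finsupp.lsum_single, LinearMap.id_apply, sub_self]
  obtain ⟨c, hc⟩ := hsub hz
  let φ : SimpChain k L 0 →ₗ[k] k :=
    Finsupp.lsum k fun s =>
      if ∃ a ∈ s.1, Relation.ReflTransGen R u a then (LinearMap.id : k →ₗ[k] k) else 0
  have hφz : φ z = 1 := by
    have h0 : φ (Finsupp.single a0 1) = 1 := by
      simp only [φ, Finsupp.lsum_single]
      rw [if_pos ⟨u, Finset.mem_singleton_self u, Relation.ReflTransGen.refl⟩]
      rfl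
    have h1 : φ (Finsupp.single a1 1) = 0 := by
      simp only [φ, Finsupp.lsum_single]
      rw [if_neg]
      · rfl
      · rintro ⟨a, ha, hra⟩
        simp only [a1, Finset.mem_singleton] at ha
        exact hreach (ha ▸ hra)
    simp [z, map_sub, h0, h1]
  have hφb : ∀ c, φ (simpBoundary k L 0 c) = 0 := by
    have hcomp : φ.comp (simpBoundary k L 0) = 0 := by
      apply Finsupp.lhom_ext
      intro e b
      have key : ∀ w ∈ e.1,
          ((∃ a ∈ e.1.erase w, Relation.ReflTransGen R u a) ↔
            (∃ a ∈ e.1, Relation.ReflTransGen R u a)) := by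
        intro w hw
        constructor
        · rintro ⟨a, ha, hra⟩
          exact ⟨a, Finset.mem_of_mem_erase ha, hra⟩
        · rintro ⟨a, ha, hra⟩
          have hcard : (e.1.erase w).card = 1 := by
            rw [Finset.card_erase_of_mem hw, e.2.2]
          obtain ⟨x, hx⟩ := Finset.card_eq_one.mp hcard
          have hxx : x ∈ (e.1).erase w := by rw [hx]; exact Finset.mem_singleton_self x
          have hxe : x ∈ e.1 := Finset.mem_of_mem_erase hxx
          refine ⟨x, hxx, hra.tail ?_⟩
          show ({a, x} : Finset V) ∈ L.faces
          refine L.down_closed e.2.1 ?_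
          intro y hy
          simp only [Finset.mem_insert, Finset.mem_singleton] at hy
          rcases hy with rfl | rfl
          · exact ha
          · exact hxe
      simp only [LinearMap.coe_comp, Function.comp_apply, simpBoundary,
        Finsupp.lsum_single, LinearMap.coe_sum, Finset.sum_apply, LinearMap.smul_apply,
        Finsupp.lsingle_apply, map_sum, map_smul, LinearMap.zero_apply]
      rw [Fin.sum_univ_two]
      simp only [φ]
      erw [Finsupp.lsingle_apply, Finsupp.lsingle_apply, Finsupp.lsum_single, Finsupp.lsum_single]
      simp only [key _ (faceVertex_mem e.1 e.2.2 (0 : Fin (0 + 2))),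
        key _ (faceVertex_mem e.1 e.2.2 (1 : Fin (0 + 2)))]
      by_cases hC : ∃ a ∈ e.1, Relation.ReflTransGen R u a
      · simp [hC]
      · simp [hC]
    intro c
    exact LinearMap.congr_fun hcomp c
  rw [← hc, hφb] at hφz
  exact one_ne_zero hφz.symm

/-- Connectivity hypothesis on links of codimension-≥-2 faces. -/
def LinksConn {V : Type} [DecidableEq V] (K : ASC V) (d : ℕ) : Prop :=
  ∀ σ ∈ K.faces, σ.card + 2 ≤ d → GraphConn (K.link σ)

lemma link_dim_linksConn {V : Type} [DecidableEq V] {K : ASC V} {n : ℕ}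
    (hdim : K.hasDim ((n + 1 : ℕ) - 1)) (hhyp : LinksConn K (n + 1))
    {G : Finset V} {y : V} (hG : G ∈ K.faces) (hGc : G.card = n + 1) (hyG : y ∈ G) :
    (K.link {y}).hasDim ((n : ℤ) - 1) ∧ LinksConn (K.link {y}) n := by
  have hyK : ({y} : Finset V) ∈ K.faces := K.down_closed hG (by simp [hyG])
  constructor
  · constructor
    · refine ⟨G.erase y, ⟨?_, ?_⟩, ?_⟩
      · rw [Finset.eq_empty_iff_forall_notMem]
        intro x hx
        simp only [Finset.mem_inter, Finset.mem_erase, Finset.mem_singleton] at hx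
        exact hx.1.1 hx.2
      · have : G.erase y ∪ {y} = G := by
          rw [Finset.union_comm, ← Finset.insert_eq, Finset.insert_erase hyG]
        rw [this]; exact hG
      · have : (G.erase y).card = n := by
          rw [Finset.card_erase_of_mem hyG, hGc]
          omega
        rw [dimF, this]
    · rintro τ ⟨hτd, hτu⟩
      have hτc : (τ ∪ {y}).card ≤ n + 1 := by
        have := hdim.2 _ hτu
        rw [dimF] at this
        push_cast at this
        omega
      have hyτ : y ∉ τ := by
        intro hy
        have := Finset.eq_empty_iff_forall_notMem.mp hτd y
        simp [hy] at this
      have : τ.card + 1 ≤ n + 1 := by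
        have hcu : (τ ∪ {y}).card = τ.card + 1 := by
          rw [Finset.union_comm, ← Finset.insert_eq, Finset.card_insert_of_notMem hyτ]
        omega
      rw [dimF]
      omega
  · intro σ' hσ' hσ'c
    rw [ASC.link_link K {y} σ' hσ'.1]
    have hmem : ({y} : Finset V) ∪ σ' ∈ K.faces := by
      rw [Finset.union_comm]; exact hσ'.2
    have hyσ' : y ∉ σ' := by
      intro hy
      have := Finset.eq_empty_iff_forall_notMem.mp hσ'.1 y
      simp [hy] at this
    have hcard : (({y} : Finset V) ∪ σ').card = σ'.card + 1 := by
      rw [← Finset.insert_eq, Finset.card_insert_of_notMem hyσ']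
    exact hhyp _ hmem (by omega)

lemma claimA {V : Type} [DecidableEq V] :
    ∀ (d : ℕ) (K : ASC V), K.hasDim ((d : ℤ) - 1) → LinksConn K d →
      ∀ u, ({u} : Finset V) ∈ K.faces → ∃ G ∈ K.faces, G.card = d ∧ u ∈ G := by
  intro d
  induction d with
  | zero =>
    intro K hdim _ u hu
    have := hdim.2 _ hu
    rw [dimF] at this
    simp at this
  | succ n IH =>
    match n, IH with
    | 0, _ =>
      intro K hdim _ u hu
      exact ⟨{u}, hu, by simp, by simp⟩
    | Nat.succ m, IH =>
      intro K hdim hhyp u hu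
      obtain ⟨G0, hG0, hG0d⟩ := hdim.1
      have hG0c : G0.card = m + 2 := by
        rw [dimF] at hG0d; push_cast at hG0d; omega
      -- transfer lemma along edges
      have step : ∀ x y : V, EdgeRel K x y →
          (∃ G ∈ K.faces, G.card = m + 2 ∧ y ∈ G) →
          (∃ G ∈ K.faces, G.card = m + 2 ∧ x ∈ G) := by
        intro x y hxy hy
        obtain ⟨G, hG, hGc, hyG⟩ := hy
        by_cases hxyeq : x = y
        · exact ⟨G, hG, hGc, hxyeq ▸ hyG⟩
        obtain ⟨hLdim, hLhyp⟩ := link_dim_linksConn (n := m + 1) hdim hhyp hG hGc hyG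
        have hxL : ({x} : Finset V) ∈ (K.link {y}).faces := by
          refine ⟨?_, ?_⟩
          · rw [Finset.eq_empty_iff_forall_notMem]
            intro a ha
            simp only [Finset.mem_inter, Finset.mem_singleton] at ha
            exact hxyeq (ha.1.symm.trans ha.2)
          · have : ({x} : Finset V) ∪ {y} = {x, y} := rfl
            rw [this]; exact hxy
        obtain ⟨G', hG', hG'c, hxG'⟩ := IH (K.link {y}) hLdim hLhyp x hxL
        refine ⟨G' ∪ {y}, hG'.2, ?_, Finset.mem_union_left _ hxG'⟩
        have hyG' : y ∉ G' := by
          intro hy'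
          have := Finset.eq_empty_iff_forall_notMem.mp hG'.1 y
          simp [hy'] at this
        rw [Finset.union_comm, ← Finset.insert_eq,
          Finset.card_insert_of_notMem hyG', hG'c]
      -- K is connected
      have hempty : (∅ : Finset V) ∈ K.faces := K.down_closed hu (by simp)
      have hconnK : GraphConn K := by
        have := hhyp ∅ hempty (by simp)
        rwa [ASC.link_empty] at this
      obtain ⟨g0, hg0⟩ := Finset.card_pos.mp (by omega : 0 < G0.card)
      have hg0K : ({g0} : Finset V) ∈ K.faces := K.down_closed hG0 (by simp [hg0])
      have hpath := hconnK u g0 hu hg0K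
      have Pg0 : ∃ G ∈ K.faces, G.card = m + 2 ∧ g0 ∈ G := ⟨G0, hG0, hG0c, hg0⟩
      clear hu hg0K
      induction hpath using Relation.ReflTransGen.head_induction_on with
      | refl => exact Pg0
      | head hab _ ih => exact step _ _ hab ih

lemma pureLemma {V : Type} [DecidableEq V] :
    ∀ (d : ℕ) (K : ASC V), K.hasDim ((d : ℤ) - 1) → LinksConn K d →
      ∀ s, K.IsFacet s → dimF s = (d : ℤ) - 1 := by
  intro d
  induction d with
  | zero =>
    intro K hdim _ s hs
    have h1 := hdim.2 _ hs.1
    rw [dimF] at h1 ⊢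
    push_cast at h1 ⊢
    omega
  | succ n IH =>
    intro K hdim hhyp s hs
    obtain ⟨G0, hG0, hG0d⟩ := hdim.1
    have hG0c : G0.card = n + 1 := by
      rw [dimF] at hG0d; push_cast at hG0d; omega
    have hsne : s.Nonempty := by
      rcases Finset.eq_empty_or_nonempty s with rfl | h
      · exfalso
        have := hs.2 G0 hG0 (Finset.empty_subset _)
        rw [← this] at hG0c
        simp at hG0c
      · exact h
    obtain ⟨v, hv⟩ := hsne
    have hvK : ({v} : Finset V) ∈ K.faces := K.down_closed hs.1 (by simp [hv])
    obtain ⟨G, hG, hGc, hvG⟩ := claimA (n + 1) K hdim hhyp v hvK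
    obtain ⟨hLdim, hLhyp⟩ := link_dim_linksConn (n := n) hdim hhyp hG hGc hvG
    have hmemL : s.erase v ∈ (K.link {v}).faces := by
      refine ⟨?_, ?_⟩
      · rw [Finset.eq_empty_iff_forall_notMem]
        intro x hx
        simp only [Finset.mem_inter, Finset.mem_erase, Finset.mem_singleton] at hx
        exact hx.1.1 hx.2
      · have : s.erase v ∪ {v} = s := by
          rw [Finset.union_comm, ← Finset.insert_eq, Finset.insert_erase hv]
        rw [this]; exact hs.1
    have hfacet : (K.link {v}).IsFacet (s.erase v) := by
      refine ⟨hmemL, ?_⟩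
      intro t ht hst
      have hvt : v ∉ t := by
        intro hvt
        have := Finset.eq_empty_iff_forall_notMem.mp ht.1 v
        simp [hvt] at this
      have hstv : s ⊆ t ∪ {v} := by
        intro x hx
        by_cases hxv : x = v
        · simp [hxv]
        · exact Finset.mem_union_left _ (hst (Finset.mem_erase.mpr ⟨hxv, hx⟩))
      have hseq : s = t ∪ {v} := hs.2 _ ht.2 hstv
      apply Finset.Subset.antisymm hst
      intro x hx
      rw [Finset.mem_erase]
      refine ⟨fun hxv => hvt (hxv ▸ hx), ?_⟩
      rw [hseq]
      exact Finset.mem_union_left _ hx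
    have hdimerase := IH (K.link {v}) hLdim hLhyp (s.erase v) hfacet
    rw [dimF, Finset.card_erase_of_mem hv] at hdimerase
    rw [dimF]
    have hsc : 1 ≤ s.card := Finset.card_pos.mpr ⟨v, hv⟩
    push_cast [Nat.cast_sub hsc] at hdimerase ⊢
    omega


theorem serre_stmt_7 (k : Type) [Field k] (N : ℕ) (K : ASC (Fin N)) (d r : ℕ)
    (hd : K.hasDim ((d : ℤ) - 1)) (hr : 2 ≤ r) (hS : IsSerre k K d r) :
    ∀ s : Finset (Fin N), K.IsFacet s → dimF s = (d : ℤ) - 1 := by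
  have hhyp : LinksConn K d := by
    intro σ hσ hcard
    have key := hS σ hσ 0 (by
      rw [dimF]
      have h1 : (σ.card : ℤ) + 2 ≤ d := by exact_mod_cast hcard
      have h2 : (2 : ℤ) ≤ r := by exact_mod_cast hr
      push_cast
      exact lt_min (by omega) (by omega))
    exact graphConn_irrel _ _ K σ (graphConn_of_subsingleton k _ key)
  exact pureLemma d K hd hhyp

end
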